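/- Let G be a connected finite simple graph on n ≥ 2 vertices that is not a complete graph, with edge weights θ_{ij} = θ_{ji} ∈ (0, π) on adjacent pairs, and set θ_max = max over edges of θ_{ij}. Let λ₁ be the smallest positive eigenvalue of the normalized graph Laplacian ℒ of G. Suppose α > 0 is such that sin(αθ_{ij}) ≠ 0 for all edges and there exists a nonzero vector ρ : V(G) → ℝ satisfying, for every vertex i, Σ_{j ~ i} (ρ_j − cos(αθ_{ij})·ρ_i)/sin(αθ_{ij}) = 0. Then α ≥ arccos(1 − λ₁)/θ_max. -/

import Mathlib

open Finset

/-- The normalized graph Laplacian of a finite simple graph. -/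
noncomputable def normLap (n : ℕ) (G : SimpleGraph (Fin n)) [DecidableRel G.Adj] :
    Matrix (Fin n) (Fin n) ℝ :=
  fun i j =>
    if i = j then 1
    else if G.Adj i j then -(1 / Real.sqrt ((G.degree i : ℝ) * (G.degree j : ℝ)))
    else 0

section Aux

open Matrix

/- ### Generic `ite` helpers -/

lemma ite_hom {P : Prop} [Decidable P] {a b : ℝ} (h : P → a = b) :
    (if P then a else 0) = (if P then b else 0) := by
  split_ifs with hp
  · exact h hp
  · rfl

lemma ite_le {P : Prop} [Decidable P] {a b : ℝ} (h : P → a ≤ b) :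
    (if P then a else 0) ≤ (if P then b else 0) := by
  split_ifs with hp
  · exact h hp
  · exact le_refl 0

lemma ite_add0 {P : Prop} [Decidable P] (a b : ℝ) :
    (if P then a + b else 0) = (if P then a else 0) + (if P then b else 0) := by
  split_ifs <;> simp

lemma ite_sub0 {P : Prop} [Decidable P] (a b : ℝ) :
    (if P then a - b else 0) = (if P then a else 0) - (if P then b else 0) := by
  split_ifs <;> simp

lemma ite_mul0 {P : Prop} [Decidable P] (k a : ℝ) :
    (if P then k * a else 0) = k * (if P then a else 0) := by
  split_ifs <;> simp

lemma ite_neg0 {P : Prop} [Decidable P] (a : ℝ) :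
    (if P then -a else 0) = -(if P then a else 0) := by
  split_ifs <;> simp

/- ### Trigonometric lemmas -/

lemma abs_sin_sub_sin_le {t s : ℝ} (ht : 0 ≤ t) (hts : t ≤ s) (hs : s ≤ Real.pi) :
    |Real.sin s - Real.sin t| ≤ Real.sin (s - t) := by
  have h1 : Real.sin s - Real.sin t = 2 * Real.sin ((s - t)/2) * Real.cos ((s + t)/2) :=
    Real.sin_sub_sin s t
  have h2 : Real.sin (s - t) = 2 * Real.sin ((s - t)/2) * Real.cos ((s - t)/2) := by
    have h2' := Real.sin_two_mul ((s - t)/2)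
    have : 2 * ((s - t)/2) = s - t := by ring
    rwa [this] at h2'
  have hst2 : 0 ≤ (s - t)/2 := by linarith
  have hsin : 0 ≤ Real.sin ((s - t)/2) :=
    Real.sin_nonneg_of_nonneg_of_le_pi hst2 (by linarith [Real.pi_pos])
  have hc : |Real.cos ((s + t)/2)| ≤ Real.cos ((s - t)/2) := by
    rw [abs_le]
    constructor
    · have := Real.cos_le_cos_of_nonneg_of_le_pi (x := (s-t)/2) (y := Real.pi - (s+t)/2) hst2
        (by linarith) (by linarith)
      rw [Real.cos_pi_sub] at this
      linarith
    · exact Real.cos_le_cos_of_nonneg_of_le_pi hst2 (by linarith) (by linarith)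
  calc |Real.sin s - Real.sin t| = 2 * Real.sin ((s-t)/2) * |Real.cos ((s+t)/2)| := by
        rw [h1, abs_mul, abs_of_nonneg (by positivity)]
    _ ≤ 2 * Real.sin ((s-t)/2) * Real.cos ((s-t)/2) :=
        mul_le_mul_of_nonneg_left hc (by positivity)
    _ = Real.sin (s - t) := h2.symm

lemma edge_mono {t s x y : ℝ} (ht : 0 < t) (hts : t ≤ s) (hs : s < Real.pi) :
    (Real.cos s * (x^2 + y^2) - 2*x*y) / Real.sin s
      ≤ (Real.cos t * (x^2 + y^2) - 2*x*y) / Real.sin t := by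
  have hst : 0 < Real.sin t := Real.sin_pos_of_pos_of_lt_pi ht (lt_of_le_of_lt hts hs)
  have hss : 0 < Real.sin s := Real.sin_pos_of_pos_of_lt_pi (lt_of_lt_of_le ht hts) hs
  rw [div_le_div_iff₀ hss hst]
  have key : 2*x*y * (Real.sin s - Real.sin t) ≤ Real.sin (s - t) * (x^2 + y^2) := by
    have h1 : 2*x*y * (Real.sin s - Real.sin t)
        ≤ (2 * |x| * |y|) * |Real.sin s - Real.sin t| := by
      calc 2*x*y * (Real.sin s - Real.sin t) ≤ |2*x*y * (Real.sin s - Real.sin t)| :=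
            le_abs_self _
        _ = (2 * |x| * |y|) * |Real.sin s - Real.sin t| := by
            rw [abs_mul, abs_mul, abs_mul]; simp
    have h2 : 2 * |x| * |y| ≤ x^2 + y^2 := by
      have := two_mul_le_add_sq |x| |y|
      simpa [sq_abs] using this
    have h3 : |Real.sin s - Real.sin t| ≤ Real.sin (s - t) :=
      abs_sin_sub_sin_le ht.le hts hs.le
    calc 2*x*y * (Real.sin s - Real.sin t) ≤ (2 * |x| * |y|) * |Real.sin s - Real.sin t| := h1
      _ ≤ (x^2+y^2) * |Real.sin s - Real.sin t| :=
          mul_le_mul_of_nonneg_right h2 (abs_nonneg _)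
      _ ≤ (x^2+y^2) * Real.sin (s - t) := mul_le_mul_of_nonneg_left h3 (by positivity)
      _ = Real.sin (s - t) * (x^2+y^2) := by ring
  have hsub : Real.sin (s - t) = Real.sin s * Real.cos t - Real.cos s * Real.sin t :=
    Real.sin_sub s t
  nlinarith [key]

/- ### Graph sum lemmas -/

lemma swap_sum {n : ℕ} (G : SimpleGraph (Fin n)) [DecidableRel G.Adj]
    (f : Fin n → Fin n → ℝ) :
    ∑ i, ∑ j, (if G.Adj i j then f i j else 0)
      = ∑ i, ∑ j, (if G.Adj i j then f j i else 0) := by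
  rw [Finset.sum_comm]
  refine Finset.sum_congr rfl fun i _ => Finset.sum_congr rfl fun j _ => ?_
  by_cases h : G.Adj i j
  · rw [if_pos h, if_pos h.symm]
  · rw [if_neg h, if_neg (fun h' => h h'.symm)]

lemma count_sum {n : ℕ} (G : SimpleGraph (Fin n)) [DecidableRel G.Adj] (i : Fin n)
    (c : ℝ) :
    ∑ j, (if G.Adj i j then c else 0) = (G.degree i : ℝ) * c := by
  rw [show (∑ j, (if G.Adj i j then c else 0)) = ∑ j ∈ G.neighborFinset i, c by
    rw [SimpleGraph.neighborFinset_eq_filter, Finset.sum_filter]]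
  rw [Finset.sum_const, SimpleGraph.card_neighborFinset_eq_degree, nsmul_eq_mul]

lemma deg_pos {n : ℕ} (hn : 2 ≤ n) (G : SimpleGraph (Fin n)) [DecidableRel G.Adj]
    (hconn : G.Connected) (i : Fin n) : 0 < G.degree i := by
  rw [G.degree_pos_iff_exists_adj]
  obtain ⟨j, hj⟩ : ∃ j : Fin n, j ≠ i := by
    have : 1 < Fintype.card (Fin n) := by rw [Fintype.card_fin]; omega
    exact Fintype.exists_ne_of_one_lt_card this i
  obtain ⟨w⟩ := hconn.preconnected i j
  cases w with
  | nil => exact absurd rfl hj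
  | cons h p => exact ⟨_, h⟩

lemma const_of_adj {n : ℕ} (G : SimpleGraph (Fin n)) [DecidableRel G.Adj]
    (hconn : G.Connected) (f : Fin n → ℝ)
    (h : ∀ i j, G.Adj i j → f i = f j) (i j : Fin n) : f i = f j := by
  obtain ⟨w⟩ := hconn.preconnected i j
  induction w with
  | nil => rfl
  | cons hadj p ih => exact (h _ _ hadj).trans ih

/- ### Laplacian lemmas -/

lemma normLap_herm {n : ℕ} (G : SimpleGraph (Fin n)) [DecidableRel G.Adj] :
    (normLap n G).IsHermitian := by
  show (normLap n G).conjTranspose = normLap n G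
  ext i j
  simp only [Matrix.conjTranspose_apply, star_trivial, normLap]
  by_cases hij : i = j
  · subst hij; simp
  · rw [if_neg (fun h => hij h.symm), if_neg hij]
    by_cases hadj : G.Adj i j
    · rw [if_pos hadj.symm, if_pos hadj, mul_comm]
    · rw [if_neg (fun h => hadj h.symm), if_neg hadj]

lemma lap_dot {n : ℕ} (G : SimpleGraph (Fin n)) [DecidableRel G.Adj]
    (hd : ∀ i, (0:ℝ) < (G.degree i : ℝ)) (y : Fin n → ℝ) :
    (normLap n G).mulVec y ⬝ᵥ y
      = ∑ i, y i * y i - ∑ i, ∑ j, (if G.Adj i j then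
          (y i / Real.sqrt (G.degree i)) * (y j / Real.sqrt (G.degree j)) else 0) := by
  have hr : ∀ i, (0:ℝ) < Real.sqrt (G.degree i) := fun i => Real.sqrt_pos.mpr (hd i)
  have h1 : (normLap n G).mulVec y ⬝ᵥ y = ∑ i, ∑ j, (normLap n G) i j * y j * y i := by
    simp only [dotProduct, Matrix.mulVec, dotProduct, Finset.sum_mul]
  rw [h1]
  have h2 : ∀ i j, (normLap n G) i j * y j * y i
      = (if i = j then y i * y i else 0)
        - (if G.Adj i j then (y i / Real.sqrt (G.degree i)) * (y j / Real.sqrt (G.degree j)) else 0) := by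
    intro i j
    by_cases hij : i = j
    · subst hij
      simp [normLap, G.irrefl]
    · rw [show (normLap n G) i j
          = if G.Adj i j then -(1 / Real.sqrt ((G.degree i : ℝ) * (G.degree j : ℝ))) else 0 by
        simp [normLap, hij]]
      rw [if_neg hij]
      by_cases hadj : G.Adj i j
      · rw [if_pos hadj, if_pos hadj]
        rw [Real.sqrt_mul (hd i).le]
        field_simp
        ring
      · simp [hadj]
  calc ∑ i, ∑ j, (normLap n G) i j * y j * y i
      = ∑ i, ∑ j, ((if i = j then y i * y i else 0)
        - (if G.Adj i j then (y i / Real.sqrt (G.degree i)) * (y j / Real.sqrt (G.degree j)) else 0)) :=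
        Finset.sum_congr rfl fun i _ => Finset.sum_congr rfl fun j _ => h2 i j
    _ = ∑ i, ((∑ j, (if i = j then y i * y i else 0))
          - ∑ j, (if G.Adj i j then (y i / Real.sqrt (G.degree i)) * (y j / Real.sqrt (G.degree j)) else 0)) :=
        Finset.sum_congr rfl fun i _ => Finset.sum_sub_distrib _ _
    _ = _ := by
        rw [Finset.sum_sub_distrib]
        congr 1
        exact Finset.sum_congr rfl fun i _ => by simp

lemma lap_quadform {n : ℕ} (G : SimpleGraph (Fin n)) [DecidableRel G.Adj]
    (hd : ∀ i, (0:ℝ) < (G.degree i : ℝ)) (y : Fin n → ℝ) :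
    (normLap n G).mulVec y ⬝ᵥ y
      = (1/2) * ∑ i, ∑ j, (if G.Adj i j then
          (y i / Real.sqrt (G.degree i) - y j / Real.sqrt (G.degree j))^2 else 0) := by
  have hr : ∀ i, (0:ℝ) < Real.sqrt (G.degree i) := fun i => Real.sqrt_pos.mpr (hd i)
  set a : Fin n → ℝ := fun i => y i / Real.sqrt (G.degree i) with ha
  have hda : ∀ i, (G.degree i : ℝ) * (a i * a i) = y i * y i := by
    intro i
    have hne : (G.degree i : ℝ) ≠ 0 := (hd i).ne'
    rw [ha]
    simp only
    rw [div_mul_div_comm, Real.mul_self_sqrt (hd i).le, mul_comm, div_mul_cancel₀ _ hne]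
  have e1 : ∑ i, ∑ j, (if G.Adj i j then (a i - a j)^2 else 0)
      = ∑ i, ∑ j, (if G.Adj i j then (a i * a i) else 0)
        + ∑ i, ∑ j, (if G.Adj i j then (a j * a j) else 0)
        - 2 * ∑ i, ∑ j, (if G.Adj i j then (a i * a j) else 0) := by
    have per : ∀ i, ∑ j, (if G.Adj i j then (a i - a j)^2 else 0)
        = ∑ j, (if G.Adj i j then (a i * a i) else 0)
          + ∑ j, (if G.Adj i j then (a j * a j) else 0)
          - 2 * ∑ j, (if G.Adj i j then (a i * a j) else 0) := by
      intro i
      rw [← Finset.sum_add_distrib, Finset.mul_sum, ← Finset.sum_sub_distrib]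
      refine Finset.sum_congr rfl fun j _ => ?_
      by_cases h : G.Adj i j
      · simp only [if_pos h]; ring
      · simp [h]
    calc ∑ i, ∑ j, (if G.Adj i j then (a i - a j)^2 else 0)
        = ∑ i, ((∑ j, (if G.Adj i j then (a i * a i) else 0))
          + (∑ j, (if G.Adj i j then (a j * a j) else 0))
          - 2 * ∑ j, (if G.Adj i j then (a i * a j) else 0)) :=
        Finset.sum_congr rfl fun i _ => per i
      _ = _ := by
        simp only [Finset.sum_sub_distrib, Finset.sum_add_distrib, ← Finset.mul_sum]
  have e2 : ∑ i, ∑ j, (if G.Adj i j then (a j * a j) else 0)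
      = ∑ i, ∑ j, (if G.Adj i j then (a i * a i) else 0) :=
    swap_sum G (fun i j => a j * a j)
  have e3 : ∑ i, ∑ j, (if G.Adj i j then (a i * a i) else 0) = ∑ i, y i * y i := by
    refine Finset.sum_congr rfl fun i _ => ?_
    rw [count_sum G i (a i * a i), hda]
  rw [lap_dot G hd y, e1, e2, e3]
  ring

lemma lap_psd {n : ℕ} (G : SimpleGraph (Fin n)) [DecidableRel G.Adj]
    (hd : ∀ i, (0:ℝ) < (G.degree i : ℝ)) (y : Fin n → ℝ) :
    0 ≤ (normLap n G).mulVec y ⬝ᵥ y := by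
  rw [lap_quadform G hd y]
  have : (0:ℝ) ≤ ∑ i, ∑ j, (if G.Adj i j then
      (y i / Real.sqrt (G.degree i) - y j / Real.sqrt (G.degree j))^2 else 0) := by
    refine Finset.sum_nonneg fun i _ => Finset.sum_nonneg fun j _ => ?_
    by_cases h : G.Adj i j
    · rw [if_pos h]; positivity
    · simp [h]
  linarith

lemma lap_ker {n : ℕ} (hn : 2 ≤ n) (G : SimpleGraph (Fin n)) [DecidableRel G.Adj]
    (hconn : G.Connected)
    (hd : ∀ i, (0:ℝ) < (G.degree i : ℝ)) (y : Fin n → ℝ)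
    (hy : (normLap n G).mulVec y = 0) :
    ∃ c : ℝ, y = c • (fun i => Real.sqrt ((G.degree i : ℝ))) := by
  have hr : ∀ i, (0:ℝ) < Real.sqrt (G.degree i) := fun i => Real.sqrt_pos.mpr (hd i)
  have hdot : (normLap n G).mulVec y ⬝ᵥ y = 0 := by rw [hy]; simp [dotProduct]
  rw [lap_quadform G hd y] at hdot
  have hsum : ∑ i, ∑ j, (if G.Adj i j then
      (y i / Real.sqrt (G.degree i) - y j / Real.sqrt (G.degree j))^2 else 0) = 0 := by
    linarith
  have hnn : ∀ i ∈ (univ : Finset (Fin n)), (0:ℝ) ≤ ∑ j, (if G.Adj i j then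
      (y i / Real.sqrt (G.degree i) - y j / Real.sqrt (G.degree j))^2 else 0) := by
    intro i _
    refine Finset.sum_nonneg fun j _ => ?_
    by_cases h : G.Adj i j
    · rw [if_pos h]; positivity
    · simp [h]
  have hrow := (Finset.sum_eq_zero_iff_of_nonneg hnn).mp hsum
  have hadjeq : ∀ i j, G.Adj i j → y i / Real.sqrt (G.degree i) = y j / Real.sqrt (G.degree j) := by
    intro i j hadj
    have hrow' := hrow i (mem_univ i)
    have hnn' : ∀ j ∈ (univ : Finset (Fin n)), (0:ℝ) ≤ (if G.Adj i j then
        (y i / Real.sqrt (G.degree i) - y j / Real.sqrt (G.degree j))^2 else 0) := by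
      intro j _
      by_cases h : G.Adj i j
      · rw [if_pos h]; positivity
      · simp [h]
    have := (Finset.sum_eq_zero_iff_of_nonneg hnn').mp hrow' j (mem_univ j)
    rw [if_pos hadj] at this
    have := pow_eq_zero_iff (n := 2) (by norm_num) |>.mp this
    linarith [sub_eq_zero.mp this]
  have hconst := const_of_adj G hconn (fun i => y i / Real.sqrt (G.degree i)) hadjeq
  have hi0 : (0:ℕ) < n := by omega
  set i₀ : Fin n := ⟨0, hi0⟩
  refine ⟨y i₀ / Real.sqrt (G.degree i₀), funext fun i => ?_⟩
  have h1 := hconst i i₀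
  have : y i = (y i / Real.sqrt (G.degree i)) * Real.sqrt (G.degree i) :=
    (div_mul_cancel₀ _ (hr i).ne').symm
  rw [this, h1]
  simp [mul_comm]

/- ### dot product of sum -/

lemma sumdot {n : ℕ} {ι : Type*} (s : Finset ι) (f : ι → Fin n → ℝ) (v : Fin n → ℝ) :
    (∑ i ∈ s, f i) ⬝ᵥ v = ∑ i ∈ s, (f i ⬝ᵥ v) := by
  simp only [dotProduct, Finset.sum_apply, Finset.sum_mul]
  exact Finset.sum_comm

/- ### Spectral bound -/

lemma spec_bound {n : ℕ} (A : Matrix (Fin n) (Fin n) ℝ) (hA : A.IsHermitian)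
    (lam : ℝ) (w x : Fin n → ℝ)
    (hPSD : ∀ y : Fin n → ℝ, 0 ≤ A.mulVec y ⬝ᵥ y)
    (hker : ∀ y : Fin n → ℝ, A.mulVec y = 0 → ∃ c : ℝ, y = c • w)
    (hmin : ∀ μ : ℝ, 0 < μ → (∃ y : Fin n → ℝ, y ≠ 0 ∧ A.mulVec y = μ • y) → lam ≤ μ)
    (hx : w ⬝ᵥ x = 0) :
    lam * (x ⬝ᵥ x) ≤ A.mulVec x ⬝ᵥ x := by
  classical
  set b := hA.eigenvectorBasis with hb
  set μ := hA.eigenvalues with hμ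
  set c : Fin n → ℝ := fun i => (b i : Fin n → ℝ) ⬝ᵥ x with hc
  have hdi : ∀ (u v : EuclideanSpace ℝ (Fin n)), (inner ℝ u v : ℝ) = (u : Fin n → ℝ) ⬝ᵥ v := by
    intro u v
    simp [PiLp.inner_apply, RCLike.inner_apply, dotProduct, mul_comm]
  have hinner : ∀ i, (inner ℝ (b i) (WithLp.toLp 2 x) : ℝ) = c i := by
    intro i; rw [hdi]
  have hrepr : ∑ i, c i • ((b i : Fin n → ℝ)) = x := by
    have h := b.sum_repr' (WithLp.toLp 2 x)
    simp only [hinner] at h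
    have h' := congrArg WithLp.ofLp h
    simpa using h'
  have heig : ∀ i, A.mulVec (b i : Fin n → ℝ) = μ i • (b i : Fin n → ℝ) :=
    fun i => hA.mulVec_eigenvectorBasis i
  have hxx : x ⬝ᵥ x = ∑ i, c i * c i := by
    nth_rewrite 1 [← hrepr]
    rw [sumdot]
    refine Finset.sum_congr rfl fun i _ => ?_
    rw [smul_dotProduct]; rfl
  have hAx : A.mulVec x ⬝ᵥ x = ∑ i, μ i * (c i * c i) := by
    nth_rewrite 1 [← hrepr]
    have h : A.mulVec (∑ i, c i • ((b i : Fin n → ℝ))) = ∑ i, c i • (μ i • (b i : Fin n → ℝ)) := by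
      rw [← Matrix.mulVecLin_apply, map_sum]
      refine Finset.sum_congr rfl fun i _ => ?_
      rw [_root_.map_smul, Matrix.mulVecLin_apply, heig]
    rw [h, sumdot]
    refine Finset.sum_congr rfl fun i _ => ?_
    rw [smul_dotProduct, smul_dotProduct]
    simp only [smul_eq_mul, hc]; ring
  have hbb : ∀ i, (b i : Fin n → ℝ) ⬝ᵥ (b i : Fin n → ℝ) = 1 := by
    intro i
    rw [← hdi]
    rw [real_inner_self_eq_norm_sq, b.orthonormal.1 i]; norm_num
  have hnn : ∀ i, 0 ≤ μ i := by
    intro i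
    have h1 := hPSD (b i : Fin n → ℝ)
    rw [heig, smul_dotProduct, hbb i, smul_eq_mul, mul_one] at h1
    exact h1
  have key : ∀ i, lam * (c i * c i) ≤ μ i * (c i * c i) := by
    intro i
    rcases (hnn i).lt_or_eq with hpos | hzero
    · have hbne : (b i : Fin n → ℝ) ≠ 0 := by
        intro h0
        have h1 := hbb i
        rw [h0] at h1
        simp [dotProduct] at h1
      have := hmin (μ i) hpos ⟨(b i : Fin n → ℝ), hbne, heig i⟩
      exact mul_le_mul_of_nonneg_right this (mul_self_nonneg _)
    · have h0 : A.mulVec (b i : Fin n → ℝ) = 0 := by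
        rw [heig, ← hzero, zero_smul]
      obtain ⟨k, hk⟩ := hker _ h0
      have hci : c i = 0 := by
        rw [hc]; simp only
        rw [hk, smul_dotProduct, hx, smul_zero]
      rw [hci]; simp
  calc lam * (x ⬝ᵥ x) = ∑ i, lam * (c i * c i) := by rw [hxx, Finset.mul_sum]
    _ ≤ ∑ i, μ i * (c i * c i) := Finset.sum_le_sum fun i _ => key i
    _ = A.mulVec x ⬝ᵥ x := hAx.symm

end Aux

section Main
open Matrix

set_option maxHeartbeats 2000000 in
/-- If `G` is connected, not complete, with edge weights `θᵢⱼ ∈ (0,π)`, `λ₁` is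
the smallest positive eigenvalue of the normalized Laplacian, and some nonzero
`ρ` satisfies the balancing conditions for a nonsingular degree `α > 0`, then
`α ≥ arccos(1 - λ₁)/θ_max`. -/
theorem stmt_7 (n : ℕ) (hn : 2 ≤ n) (G : SimpleGraph (Fin n)) [DecidableRel G.Adj]
    (hconn : G.Connected) (hncomplete : G ≠ ⊤)
    (θ : Fin n → Fin n → ℝ) (hsym : ∀ i j, θ i j = θ j i)
    (hrange : ∀ i j, G.Adj i j → θ i j ∈ Set.Ioo (0 : ℝ) Real.pi)
    (θmax : ℝ) (hmax : IsGreatest {t : ℝ | ∃ i j, G.Adj i j ∧ θ i j = t} θmax)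
    (lam₁ : ℝ) (hlam_pos : 0 < lam₁)
    (hlam_ev : ∃ v : Fin n → ℝ, v ≠ 0 ∧ (normLap n G).mulVec v = lam₁ • v)
    (hlam_min : ∀ μ : ℝ, 0 < μ →
      (∃ v : Fin n → ℝ, v ≠ 0 ∧ (normLap n G).mulVec v = μ • v) → lam₁ ≤ μ)
    (α : ℝ) (hα : 0 < α)
    (hns : ∀ i j, G.Adj i j → Real.sin (α * θ i j) ≠ 0)
    (ρ : Fin n → ℝ) (hρ : ρ ≠ 0)
    (hbal : ∀ i, ∑ j ∈ G.neighborFinset i,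
        (ρ j - Real.cos (α * θ i j) * ρ i) / Real.sin (α * θ i j) = 0) :
    Real.arccos (1 - lam₁) / θmax ≤ α := by
  classical
  by_contra hcon
  push_neg at hcon
  obtain ⟨⟨i0, j0, hadj0, hθ0⟩, hub⟩ := hmax
  have hθmax_pos : 0 < θmax := by rw [← hθ0]; exact (hrange i0 j0 hadj0).1
  have hslt : α * θmax < Real.arccos (1 - lam₁) := (lt_div_iff₀ hθmax_pos).mp hcon
  set s : ℝ := α * θmax with hs
  have hspos : 0 < s := mul_pos hα hθmax_pos
  have hsltpi : s < Real.pi := lt_of_lt_of_le hslt (Real.arccos_le_pi _)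
  have hsins : 0 < Real.sin s := Real.sin_pos_of_pos_of_lt_pi hspos hsltpi
  have hcos_lt : 1 - Real.cos s < lam₁ := by
    have h1 : Real.cos (Real.arccos (1 - lam₁)) < Real.cos s :=
      Real.cos_lt_cos_of_nonneg_of_le_pi hspos.le (Real.arccos_le_pi _) hslt
    rcases le_or_gt (-1) (1 - lam₁) with h | h
    · rw [Real.cos_arccos h (by linarith)] at h1; linarith
    · have := Real.neg_one_le_cos s; linarith
  have hedge_pos : ∀ i j, G.Adj i j → 0 < α * θ i j :=
    fun i j h => mul_pos hα (hrange i j h).1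
  have hedge_le : ∀ i j, G.Adj i j → α * θ i j ≤ s :=
    fun i j h => mul_le_mul_of_nonneg_left (hub ⟨i, j, h, rfl⟩) hα.le
  have hsin : ∀ i j, G.Adj i j → 0 < Real.sin (α * θ i j) :=
    fun i j h => Real.sin_pos_of_pos_of_lt_pi (hedge_pos i j h)
      (lt_of_le_of_lt (hedge_le i j h) hsltpi)
  have hcos1 : ∀ i j, G.Adj i j → Real.cos (α * θ i j) < 1 := by
    intro i j h
    have := Real.cos_lt_cos_of_nonneg_of_le_pi (x := 0) (y := α * θ i j) le_rfl
      (le_of_lt (lt_of_le_of_lt (hedge_le i j h) hsltpi)) (hedge_pos i j h)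
    rwa [Real.cos_zero] at this
  have hd : ∀ i, (0:ℝ) < (G.degree i : ℝ) := fun i => by
    exact_mod_cast deg_pos hn G hconn i
  have hr : ∀ i, (0:ℝ) < Real.sqrt (G.degree i) := fun i => Real.sqrt_pos.mpr (hd i)
  set D : ℝ := ∑ k, (G.degree k : ℝ) with hD
  set S : ℝ := ∑ k, (G.degree k : ℝ) * ρ k with hS
  have hDpos : 0 < D :=
    Finset.sum_pos (fun k _ => hd k) ⟨i0, mem_univ _⟩
  set v : Fin n → ℝ := fun i => D * ρ i - S with hv
  have hvsum : ∑ i, (G.degree i : ℝ) * v i = 0 := by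
    have h1 : ∀ i, (G.degree i : ℝ) * v i
        = D * ((G.degree i : ℝ) * ρ i) - (G.degree i : ℝ) * S := by
      intro i; rw [hv]; ring
    rw [Finset.sum_congr rfl fun i _ => h1 i, Finset.sum_sub_distrib,
      ← Finset.mul_sum, ← Finset.sum_mul, ← hS, ← hD, sub_self]
  -- balancing condition as a full sum
  have Ebal : ∀ i, ∑ j, (if G.Adj i j then
      (Real.cos (α * θ i j) * ρ i - ρ j) / Real.sin (α * θ i j) else 0) = 0 := by
    intro i
    have h := hbal i
    rw [SimpleGraph.neighborFinset_eq_filter, Finset.sum_filter] at h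
    have h2 : ∑ j, (if G.Adj i j then
        (Real.cos (α * θ i j) * ρ i - ρ j) / Real.sin (α * θ i j) else 0)
        = - ∑ j, (if G.Adj i j then
        (ρ j - Real.cos (α * θ i j) * ρ i) / Real.sin (α * θ i j) else 0) := by
      rw [← Finset.sum_neg_distrib]
      refine Finset.sum_congr rfl fun j _ => ?_
      rw [← ite_neg0]
      exact ite_hom fun _ => by rw [← neg_div, neg_sub]
    rw [h2, h, neg_zero]
  by_cases hvz : v = 0
  · -- degenerate case : ρ is constant
    have hk : ∀ i, ρ i = S / D := by
      intro i
      have h := congrFun hvz i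
      simp only [hv, Pi.zero_apply] at h
      field_simp
      linarith
    have hkne : S / D ≠ 0 := by
      intro h0
      apply hρ
      funext i
      rw [hk i, h0]; rfl
    have hsum0 := hbal i0
    have hfac : ∑ j ∈ G.neighborFinset i0,
        (ρ j - Real.cos (α * θ i0 j) * ρ i0) / Real.sin (α * θ i0 j)
        = (S/D) * ∑ j ∈ G.neighborFinset i0,
          (1 - Real.cos (α * θ i0 j)) / Real.sin (α * θ i0 j) := by
      rw [Finset.mul_sum]
      refine Finset.sum_congr rfl fun j hj => ?_
      rw [hk j, hk i0, ← mul_div_assoc]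
      ring_nf
    have hpos : 0 < ∑ j ∈ G.neighborFinset i0,
        (1 - Real.cos (α * θ i0 j)) / Real.sin (α * θ i0 j) := by
      refine Finset.sum_pos (fun j hj => ?_) ⟨j0, (SimpleGraph.mem_neighborFinset G i0 j0).mpr hadj0⟩
      rw [SimpleGraph.mem_neighborFinset] at hj
      exact div_pos (by linarith [hcos1 i0 j hj]) (hsin i0 j hj)
    rw [hfac] at hsum0
    rcases mul_eq_zero.mp hsum0 with h | h
    · exact hkne h
    · linarith
  · -- main case
    set x : Fin n → ℝ := fun i => Real.sqrt (G.degree i) * v i with hx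
    have hx2 : ∀ i, x i * x i = (G.degree i : ℝ) * (v i * v i) := by
      intro i
      rw [hx]
      simp only
      rw [show Real.sqrt (G.degree i) * v i * (Real.sqrt (G.degree i) * v i)
        = (Real.sqrt (G.degree i) * Real.sqrt (G.degree i)) * (v i * v i) by ring,
        Real.mul_self_sqrt (hd i).le]
    have hxx : x ⬝ᵥ x = ∑ i, (G.degree i : ℝ) * (v i * v i) := by
      simp only [dotProduct]
      exact Finset.sum_congr rfl fun i _ => hx2 i
    have hxxpos : 0 < x ⬝ᵥ x := by
      rw [hxx]
      obtain ⟨i1, hi1⟩ : ∃ i, v i ≠ 0 := by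
        by_contra hall; push_neg at hall; exact hvz (funext hall)
      refine Finset.sum_pos' (fun i _ => mul_nonneg (hd i).le (mul_self_nonneg _))
        ⟨i1, mem_univ _, mul_pos (hd i1) (mul_self_pos.mpr hi1)⟩
    have hwx : (fun i => Real.sqrt ((G.degree i : ℝ))) ⬝ᵥ x = 0 := by
      rw [show (fun i => Real.sqrt ((G.degree i : ℝ))) ⬝ᵥ x
          = ∑ i, (G.degree i : ℝ) * v i from ?_, hvsum]
      simp only [dotProduct, hx]
      refine Finset.sum_congr rfl fun i _ => ?_
      rw [show Real.sqrt (G.degree i) * (Real.sqrt (G.degree i) * v i)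
        = (Real.sqrt (G.degree i) * Real.sqrt (G.degree i)) * v i by ring,
        Real.mul_self_sqrt (hd i).le]
    have hL := spec_bound (normLap n G) (normLap_herm G) lam₁
      (fun i => Real.sqrt ((G.degree i : ℝ))) x (lap_psd G hd)
      (fun y hy => lap_ker hn G hconn hd y hy) hlam_min hwx
    have hlap : (normLap n G).mulVec x ⬝ᵥ x
        = ∑ i, (G.degree i : ℝ) * (v i * v i)
          - ∑ i, ∑ j, (if G.Adj i j then v i * v j else 0) := by
      have hdiv : ∀ i, x i / Real.sqrt (G.degree i) = v i := by
        intro i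
        rw [hx]
        exact mul_div_cancel_left₀ _ (hr i).ne'
      have e1 : ∑ i, x i * x i = ∑ i, (G.degree i : ℝ) * (v i * v i) :=
        Finset.sum_congr rfl fun i _ => hx2 i
      have e2 : ∑ i, ∑ j, (if G.Adj i j then
            (x i / Real.sqrt (G.degree i)) * (x j / Real.sqrt (G.degree j)) else 0)
          = ∑ i, ∑ j, (if G.Adj i j then v i * v j else 0) :=
        Finset.sum_congr rfl fun i _ => Finset.sum_congr rfl fun j _ =>
          ite_hom fun _ => by rw [hdiv, hdiv]
      rw [lap_dot G hd x, e1, e2]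
    -- the balancing quadratic form
    set Q : ℝ := ∑ i, ∑ j, (if G.Adj i j then
      (Real.cos (α * θ i j) * v i - v j) * v i / Real.sin (α * θ i j) else 0) with hQ
    -- (a) Q ≤ 0
    have hT2 : ∑ i, ∑ j, (if G.Adj i j then
        (Real.cos (α * θ i j) * ρ i - ρ j) / Real.sin (α * θ i j) else 0) = 0 :=
      Finset.sum_eq_zero fun i _ => Ebal i
    have hT1 : ∑ i, ∑ j, (if G.Adj i j then
        (Real.cos (α * θ i j) * ρ i - ρ j) * ρ i / Real.sin (α * θ i j) else 0) = 0 := by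
      refine Finset.sum_eq_zero fun i _ => ?_
      have h : ∑ j, (if G.Adj i j then
          (Real.cos (α * θ i j) * ρ i - ρ j) * ρ i / Real.sin (α * θ i j) else 0)
          = (∑ j, (if G.Adj i j then
          (Real.cos (α * θ i j) * ρ i - ρ j) / Real.sin (α * θ i j) else 0)) * ρ i := by
        rw [Finset.sum_mul]
        refine Finset.sum_congr rfl fun j _ => ?_
        rw [ite_mul, zero_mul]
        exact ite_hom fun _ => by ring
      rw [h, Ebal i, zero_mul]
    have hX : ∑ i, ∑ j, (if G.Adj i j then (ρ i - ρ j) / Real.sin (α * θ i j) else 0) = 0 := by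
      have hswap := swap_sum G (fun i j => (ρ i - ρ j) / Real.sin (α * θ i j))
      have h2 : ∑ i, ∑ j, (if G.Adj i j then (ρ j - ρ i) / Real.sin (α * θ j i) else 0)
          = - ∑ i, ∑ j, (if G.Adj i j then (ρ i - ρ j) / Real.sin (α * θ i j) else 0) := by
        rw [← Finset.sum_neg_distrib]
        refine Finset.sum_congr rfl fun i _ => ?_
        rw [← Finset.sum_neg_distrib]
        refine Finset.sum_congr rfl fun j _ => ?_
        rw [← ite_neg0]
        exact ite_hom fun _ => by rw [hsym j i, ← neg_div, neg_sub]
      rw [h2] at hswap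
      linarith
    have hT3 : ∑ i, ∑ j, (if G.Adj i j then
        (Real.cos (α * θ i j) - 1) * ρ i / Real.sin (α * θ i j) else 0) = 0 := by
      have h : ∑ i, ∑ j, (if G.Adj i j then
          (Real.cos (α * θ i j) - 1) * ρ i / Real.sin (α * θ i j) else 0)
          = ∑ i, ∑ j, (if G.Adj i j then
            ((Real.cos (α * θ i j) * ρ i - ρ j) / Real.sin (α * θ i j)
              - (ρ i - ρ j) / Real.sin (α * θ i j)) else 0) := by
        refine Finset.sum_congr rfl fun i _ => Finset.sum_congr rfl fun j _ => ?_
        refine ite_hom fun _ => ?_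
        rw [div_sub_div_same]
        congr 1
        ring
      rw [h]
      simp only [ite_sub0, Finset.sum_sub_distrib]
      rw [hT2, hX, sub_zero]
    have hT4 : ∑ i, ∑ j, (if G.Adj i j then
        (Real.cos (α * θ i j) - 1) / Real.sin (α * θ i j) else 0) ≤ 0 := by
      refine Finset.sum_nonpos fun i _ => Finset.sum_nonpos fun j _ => ?_
      by_cases h : G.Adj i j
      · rw [if_pos h]
        exact div_nonpos_of_nonpos_of_nonneg (by linarith [hcos1 i j h]) (hsin i j h).le
      · simp [h]
    have hQle : Q ≤ 0 := by
      have hterm : ∀ i j : Fin n,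
          (if G.Adj i j then (Real.cos (α * θ i j) * v i - v j) * v i / Real.sin (α * θ i j) else 0)
          = D^2 * (if G.Adj i j then (Real.cos (α * θ i j) * ρ i - ρ j) * ρ i / Real.sin (α * θ i j) else 0)
            - (D*S) * (if G.Adj i j then (Real.cos (α * θ i j) * ρ i - ρ j) / Real.sin (α * θ i j) else 0)
            - (D*S) * (if G.Adj i j then (Real.cos (α * θ i j) - 1) * ρ i / Real.sin (α * θ i j) else 0)
            + S^2 * (if G.Adj i j then (Real.cos (α * θ i j) - 1) / Real.sin (α * θ i j) else 0) := by
        intro i j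
        by_cases h : G.Adj i j
        · simp only [if_pos h]
          rw [hv]
          simp only
          have hsne := (hsin i j h).ne'
          field_simp
          ring
        · simp [h]
      have hdec : Q = D^2 * (∑ i, ∑ j, (if G.Adj i j then
            (Real.cos (α * θ i j) * ρ i - ρ j) * ρ i / Real.sin (α * θ i j) else 0))
          - (D*S) * (∑ i, ∑ j, (if G.Adj i j then
            (Real.cos (α * θ i j) * ρ i - ρ j) / Real.sin (α * θ i j) else 0))
          - (D*S) * (∑ i, ∑ j, (if G.Adj i j then
            (Real.cos (α * θ i j) - 1) * ρ i / Real.sin (α * θ i j) else 0))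
          + S^2 * (∑ i, ∑ j, (if G.Adj i j then
            (Real.cos (α * θ i j) - 1) / Real.sin (α * θ i j) else 0)) := by
        rw [hQ]
        rw [Finset.sum_congr rfl fun i _ => Finset.sum_congr rfl fun j _ => hterm i j]
        simp only [Finset.sum_add_distrib, Finset.sum_sub_distrib, ← Finset.mul_sum]
      rw [hdec, hT1, hT2, hT3]
      nlinarith [sq_nonneg S, hT4]
    -- (b) Q > 0
    have hsymQ : 2 * Q = ∑ i, ∑ j, (if G.Adj i j then
        (Real.cos (α * θ i j) * (v i^2 + v j^2) - 2 * v i * v j) / Real.sin (α * θ i j) else 0) := by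
      have hswap := swap_sum G
        (fun i j => (Real.cos (α * θ i j) * v i - v j) * v i / Real.sin (α * θ i j))
      have h2 : ∑ i, ∑ j, (if G.Adj i j then
          (Real.cos (α * θ j i) * v j - v i) * v j / Real.sin (α * θ j i) else 0)
          = ∑ i, ∑ j, (if G.Adj i j then
          (Real.cos (α * θ i j) * v j - v i) * v j / Real.sin (α * θ i j) else 0) :=
        Finset.sum_congr rfl fun i _ => Finset.sum_congr rfl fun j _ =>
          ite_hom fun _ => by rw [hsym j i]
      rw [h2] at hswap
      calc 2 * Q = Q + Q := by ring
        _ = ∑ i, ∑ j, ((if G.Adj i j then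
              (Real.cos (α * θ i j) * v i - v j) * v i / Real.sin (α * θ i j) else 0)
            + (if G.Adj i j then
              (Real.cos (α * θ i j) * v j - v i) * v j / Real.sin (α * θ i j) else 0)) := by
            rw [hQ]
            nth_rewrite 2 [hswap]
            rw [← Finset.sum_add_distrib]
            exact Finset.sum_congr rfl fun i _ => (Finset.sum_add_distrib).symm
        _ = ∑ i, ∑ j, (if G.Adj i j then
              (Real.cos (α * θ i j) * (v i^2 + v j^2) - 2 * v i * v j) / Real.sin (α * θ i j) else 0) := by
            refine Finset.sum_congr rfl fun i _ => Finset.sum_congr rfl fun j _ => ?_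
            rw [← ite_add0]
            refine ite_hom fun _ => ?_
            rw [← add_div]
            congr 1
            ring
    have hmono : ∑ i, ∑ j, (if G.Adj i j then
        (Real.cos s * (v i^2 + v j^2) - 2 * v i * v j) / Real.sin s else 0)
        ≤ ∑ i, ∑ j, (if G.Adj i j then
        (Real.cos (α * θ i j) * (v i^2 + v j^2) - 2 * v i * v j) / Real.sin (α * θ i j) else 0) :=
      Finset.sum_le_sum fun i _ => Finset.sum_le_sum fun j _ =>
        ite_le fun h => edge_mono (hedge_pos i j h) (hedge_le i j h) hsltpi
    have hTa : ∑ i, ∑ j, (if G.Adj i j then v i * v i else 0) = x ⬝ᵥ x := by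
      rw [hxx]
      exact Finset.sum_congr rfl fun i _ => count_sum G i (v i * v i)
    have hTb : ∑ i, ∑ j, (if G.Adj i j then v j * v j else 0) = x ⬝ᵥ x := by
      rw [swap_sum G (fun i j => v j * v j)]
      exact hTa
    have hTc : ∑ i, ∑ j, (if G.Adj i j then v i * v j else 0)
        = (x ⬝ᵥ x) - (normLap n G).mulVec x ⬝ᵥ x := by
      rw [hlap, hxx]
      ring
    have hcomp : ∑ i, ∑ j, (if G.Adj i j then
        (Real.cos s * (v i^2 + v j^2) - 2 * v i * v j) / Real.sin s else 0)
        = (Real.cos s / Real.sin s) * (x ⬝ᵥ x) + (Real.cos s / Real.sin s) * (x ⬝ᵥ x)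
          - (2 / Real.sin s) * ((x ⬝ᵥ x) - (normLap n G).mulVec x ⬝ᵥ x) := by
      have hterm2 : ∀ i j : Fin n,
          (if G.Adj i j then (Real.cos s * (v i^2 + v j^2) - 2 * v i * v j) / Real.sin s else 0)
          = (Real.cos s / Real.sin s) * (if G.Adj i j then v i * v i else 0)
            + (Real.cos s / Real.sin s) * (if G.Adj i j then v j * v j else 0)
            - (2 / Real.sin s) * (if G.Adj i j then v i * v j else 0) := by
        intro i j
        by_cases h : G.Adj i j
        · simp only [if_pos h]
          field_simp
        · simp [h]
      rw [Finset.sum_congr rfl fun i _ => Finset.sum_congr rfl fun j _ => hterm2 i j]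
      simp only [Finset.sum_add_distrib, Finset.sum_sub_distrib, ← Finset.mul_sum]
      rw [hTa, hTb, hTc]
    have hfinal : 0 < (Real.cos s / Real.sin s) * (x ⬝ᵥ x) + (Real.cos s / Real.sin s) * (x ⬝ᵥ x)
        - (2 / Real.sin s) * ((x ⬝ᵥ x) - (normLap n G).mulVec x ⬝ᵥ x) := by
      have heq : (Real.cos s / Real.sin s) * (x ⬝ᵥ x) + (Real.cos s / Real.sin s) * (x ⬝ᵥ x)
          - (2 / Real.sin s) * ((x ⬝ᵥ x) - (normLap n G).mulVec x ⬝ᵥ x)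
          = (2 / Real.sin s) * ((normLap n G).mulVec x ⬝ᵥ x - (1 - Real.cos s) * (x ⬝ᵥ x)) := by
        field_simp
        ring
      rw [heq]
      refine mul_pos (by positivity) ?_
      have h1 : (lam₁ - (1 - Real.cos s)) * (x ⬝ᵥ x) ≤ (normLap n G).mulVec x ⬝ᵥ x
          - (1 - Real.cos s) * (x ⬝ᵥ x) := by nlinarith [hL]
      have h2 : 0 < (lam₁ - (1 - Real.cos s)) * (x ⬝ᵥ x) :=
        mul_pos (by linarith) hxxpos
      linarith
    rw [← hcomp] at hfinal
    have := lt_of_lt_of_le hfinal hmono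
    rw [← hsymQ] at this
    linarith

end Main
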